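/- arXiv:2508.14436 — 3 statements merged into one kernel-verified Lean document; each statement's English description precedes it below -/
import Mathlib

section
/- Let X be a Banach space and T : X → X a linear operator. Suppose there exist constants λ₁, λ₂ ∈ [0,1) such that ‖Tx − x‖ ≤ λ₁‖x‖ + λ₂‖Tx‖ for all x ∈ X. Then T is bijective with bounded inverse, and for all x ∈ X, ((1 − λ₂)/(1 + λ₁))‖x‖ ≤ ‖T⁻¹x‖ ≤ ((1 + λ₂)/(1 − λ₁))‖x‖. -/
set_option maxHeartbeats 1000000

theorem barnsley_lemma_isomorphism
    {X : Type*} [NormedAddCommGroup X] [NormedSpace ℝ X] [CompleteSpace X]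
    (T : X →ₗ[ℝ] X) (l1 l2 : ℝ)
    (hl1 : 0 ≤ l1) (hl1' : l1 < 1) (hl2 : 0 ≤ l2) (hl2' : l2 < 1)
    (h : ∀ x : X, ‖T x - x‖ ≤ l1 * ‖x‖ + l2 * ‖T x‖) :
    Function.Bijective T ∧
      ∃ S : X →L[ℝ] X, (∀ x : X, T (S x) = x) ∧ (∀ x : X, S (T x) = x) ∧
        ∀ x : X, (1 - l2) / (1 + l1) * ‖x‖ ≤ ‖S x‖ ∧
          ‖S x‖ ≤ (1 + l2) / (1 - l1) * ‖x‖ := by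
  -- T is bounded
  have hbd : ∀ x : X, ‖T x‖ ≤ (1 + l1) / (1 - l2) * ‖x‖ := by
    intro x
    have h1 := h x
    have h2 : ‖T x‖ ≤ ‖x‖ + ‖T x - x‖ := by
      have := norm_add_le (T x - x) x
      simpa [sub_add_cancel, add_comm] using this
    have hx : (0:ℝ) ≤ ‖x‖ := norm_nonneg _
    have hTx : (0:ℝ) ≤ ‖T x‖ := norm_nonneg _
    rw [div_mul_eq_mul_div, le_div_iff₀ (by linarith)]
    nlinarith
  set T' : X →L[ℝ] X := T.mkContinuous _ hbd with hT'
  have hT'app : ∀ x, T' x = T x := fun x => rfl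
  -- homotopy
  set A : ℝ → (X →L[ℝ] X) := fun t => 1 + t • (T' - 1) with hA
  have hAapp : ∀ t x, A t x = x + t • (T x - x) := by
    intro t x
    simp [hA, hT'app]
  set c : ℝ := (1 - l1) * (1 - l2) / 2 with hc
  have hcpos : 0 < c := by rw [hc]; nlinarith
  -- uniform lower bound along the homotopy
  have key : ∀ t, 0 ≤ t → t ≤ 1 → ∀ x : X, c * ‖x‖ ≤ ‖A t x‖ := by
    intro t ht ht1 x
    have hd := h x
    set a := ‖x‖
    set b := ‖T x‖
    set d := ‖T x - x‖
    set u := ‖A t x‖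
    have ha : 0 ≤ a := norm_nonneg _
    have hb : 0 ≤ b := norm_nonneg _
    have hdn : 0 ≤ d := norm_nonneg _
    have hun : 0 ≤ u := norm_nonneg _
    have h1 : a ≤ u + t * d := by
      have : x = A t x - t • (T x - x) := by rw [hAapp]; abel
      calc a = ‖A t x - t • (T x - x)‖ := by rw [← this]
        _ ≤ ‖A t x‖ + ‖t • (T x - x)‖ := norm_sub_le _ _
        _ = u + t * d := by rw [norm_smul, Real.norm_eq_abs, abs_of_nonneg ht]
    have h2 : b ≤ u + (1 - t) * d := by
      have : T x = A t x + (1 - t) • (T x - x) := by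
        rw [hAapp]; rw [sub_smul, one_smul]; abel
      calc b = ‖A t x + (1 - t) • (T x - x)‖ := by rw [← this]
        _ ≤ ‖A t x‖ + ‖(1 - t) • (T x - x)‖ := norm_add_le _ _
        _ = u + (1 - t) * d := by
            rw [norm_smul, Real.norm_eq_abs, abs_of_nonneg (by linarith)]
    rw [hc]
    have pos1 : 0 < 1 - l2 * (1 - t) := by nlinarith
    have e1 : d * (1 - l2 * (1 - t)) ≤ l1 * a + l2 * u := by
      nlinarith [mul_le_mul_of_nonneg_left h2 hl2]
    have e3 := mul_le_mul_of_nonneg_left e1 ht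
    have e4 := mul_le_mul_of_nonneg_right h1 (le_of_lt pos1)
    have e5 : (1 - l1) * (1 - l2) * a ≤ a * (1 - l2 * (1 - t) - t * l1) := by
      nlinarith [mul_nonneg ha ht, mul_nonneg ha (sub_nonneg.mpr ht1),
        mul_nonneg (mul_nonneg ha ht) hl2, mul_nonneg (mul_nonneg ha ht) hl1,
        mul_nonneg (mul_nonneg (mul_nonneg ha ht) hl1) hl2,
        mul_nonneg (mul_nonneg ha (sub_nonneg.mpr ht1)) (mul_nonneg hl1 hl2),
        mul_nonneg (mul_nonneg ha (sub_nonneg.mpr ht1)) hl1]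
    have e6 : u * (1 - l2 * (1 - t) + t * l2) ≤ 2 * u := by
      nlinarith [mul_nonneg hun hl2, mul_nonneg (mul_nonneg hun hl2) ht,
        mul_nonneg (mul_nonneg hun hl2) (sub_nonneg.mpr ht1)]
    nlinarith [e3, e4, e5, e6]
  -- propagation of invertibility
  rcases subsingleton_or_nontrivial X with hX | hX
  · refine ⟨⟨fun a b _ => Subsingleton.elim a b, fun y => ⟨0, Subsingleton.elim _ _⟩⟩,
      1, fun x => Subsingleton.elim _ _, fun x => Subsingleton.elim _ _, fun x => ?_⟩
    have : x = 0 := Subsingleton.elim _ _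
    simp [this]
  · -- nontrivial case
    set K : ℝ := ‖T' - (1 : X →L[ℝ] X)‖ + 1 with hK
    have hKpos : 0 < K := by positivity
    set δ : ℝ := c / (2 * K) with hδ
    have hδpos : 0 < δ := by positivity
    have step : ∀ s t : ℝ, 0 ≤ s → s ≤ 1 → 0 ≤ t → t ≤ 1 → |t - s| ≤ δ →
        IsUnit (A s) → IsUnit (A t) := by
      intro s t hs hs1 ht ht1 hts hu
      obtain ⟨u, hu⟩ := hu
      have hinv : ‖((u⁻¹ : (X →L[ℝ] X)ˣ) : X →L[ℝ] X)‖ ≤ c⁻¹ := by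
        apply ContinuousLinearMap.opNorm_le_bound _ (by positivity)
        intro y
        have h1 : c * ‖((u⁻¹ : (X →L[ℝ] X)ˣ) : X →L[ℝ] X) y‖ ≤
            ‖A s (((u⁻¹ : (X →L[ℝ] X)ˣ) : X →L[ℝ] X) y)‖ := key s hs hs1 _
        have h2 : A s (((u⁻¹ : (X →L[ℝ] X)ˣ) : X →L[ℝ] X) y) = y := by
          rw [← hu]
          have : (u : X →L[ℝ] X) * (u⁻¹ : (X →L[ℝ] X)ˣ) = 1 := u.mul_inv
          calc (u : X →L[ℝ] X) (((u⁻¹ : (X →L[ℝ] X)ˣ) : X →L[ℝ] X) y)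
              = ((u : X →L[ℝ] X) * ((u⁻¹ : (X →L[ℝ] X)ˣ) : X →L[ℝ] X)) y := rfl
            _ = y := by rw [this]; rfl
        rw [h2] at h1
        rw [inv_mul_eq_div, le_div_iff₀ hcpos, mul_comm]
        exact h1
      have hdiff : ‖A t - A s‖ < ‖((u⁻¹ : (X →L[ℝ] X)ˣ) : X →L[ℝ] X)‖⁻¹ := by
        have hne : ((u⁻¹ : (X →L[ℝ] X)ˣ) : X →L[ℝ] X) ≠ 0 := Units.ne_zero _
        have hpos : 0 < ‖((u⁻¹ : (X →L[ℝ] X)ˣ) : X →L[ℝ] X)‖ := norm_pos_iff.mpr hne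
        have hinv' : c ≤ ‖((u⁻¹ : (X →L[ℝ] X)ˣ) : X →L[ℝ] X)‖⁻¹ := by
          rw [le_inv_comm₀ hcpos hpos] at *
          · exact hinv
        have heq : A t - A s = (t - s) • (T' - 1) := by
          rw [hA]; simp; rw [sub_smul]
        have hnrm : ‖A t - A s‖ ≤ |t - s| * ‖T' - (1 : X →L[ℝ] X)‖ := by
          rw [heq, ← Real.norm_eq_abs]
          exact ContinuousLinearMap.opNorm_smul_le _ _
        have hK' : ‖T' - (1 : X →L[ℝ] X)‖ ≤ K := by rw [hK]; linarith
        have : |t - s| * ‖T' - (1:X →L[ℝ] X)‖ ≤ δ * K :=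
          mul_le_mul hts hK' (norm_nonneg _) (le_of_lt hδpos)
        have hKne : K ≠ 0 := ne_of_gt hKpos
        have hδK : δ * K = c / 2 := by
          rw [hδ]; field_simp
        have hlt : δ * K < c := by rw [hδK]; linarith
        linarith
      rw [← hu] at hdiff
      exact (u.ofNearby (A t) hdiff).isUnit
    -- finite induction
    have ind : ∀ n : ℕ, ∀ t : ℝ, 0 ≤ t → t ≤ 1 → t ≤ n * δ → IsUnit (A t) := by
      intro n
      induction n with
      | zero =>
        intro t ht ht1 htn
        have : t = 0 := le_antisymm (by simpa using htn) ht
        subst this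
        have : A 0 = 1 := by rw [hA]; simp
        rw [this]; exact isUnit_one
      | succ n ih =>
        intro t ht ht1 htn
        by_cases hcase : t ≤ n * δ
        · exact ih t ht ht1 hcase
        · push_neg at hcase
          set s : ℝ := max (t - δ) 0 with hsdef
          have hs0 : 0 ≤ s := le_max_right _ _
          have hs1 : s ≤ 1 := by
            apply max_le _ (by norm_num); linarith
          have hsn : s ≤ n * δ := by
            apply max_le
            · push_cast at htn ⊢; linarith
            · positivity
          have hts : |t - s| ≤ δ := by
            rw [abs_le]; constructor
            · have : s ≤ t := by
                apply max_le (by linarith)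
                exact ht
              linarith
            · have : t - δ ≤ s := le_max_left _ _
              linarith
          exact step s t hs0 hs1 ht ht1 hts (ih s hs0 hs1 hsn)
    obtain ⟨n, hn⟩ := Archimedean.arch (1:ℝ) hδpos
    have hunit : IsUnit (A 1) := by
      apply ind n 1 zero_le_one le_rfl
      simpa [nsmul_eq_mul] using hn
    have hA1 : A 1 = T' := by rw [hA]; simp
    rw [hA1] at hunit
    obtain ⟨u, hu⟩ := hunit
    set S : X →L[ℝ] X := ((u⁻¹ : (X →L[ℝ] X)ˣ) : X →L[ℝ] X) with hS
    have hTS : ∀ x, T (S x) = x := by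
      intro x
      have : (u : X →L[ℝ] X) * S = 1 := by rw [hS, u.mul_inv]
      have := congrFun (congrArg DFunLike.coe this) x
      rw [hu] at this
      exact this
    have hST : ∀ x, S (T x) = x := by
      intro x
      have : S * (u : X →L[ℝ] X) = 1 := by rw [hS, u.inv_mul]
      have h2 := congrFun (congrArg DFunLike.coe this) x
      rw [hu] at h2
      exact h2
    refine ⟨⟨fun a b hab => ?_, fun y => ⟨S y, hTS y⟩⟩, S, hTS, hST, fun x => ?_⟩
    · have := congrArg S hab
      rwa [hST, hST] at this
    · -- norm bounds
      have hx := h (S x)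
      rw [hTS x] at hx
      have h1 : ‖x‖ ≤ ‖S x‖ + ‖x - S x‖ := by
        have := norm_add_le (x - S x) (S x)
        simpa [sub_add_cancel, add_comm] using this
      have h2 : ‖S x‖ ≤ ‖x‖ + ‖x - S x‖ := by
        calc ‖S x‖ = ‖x - (x - S x)‖ := by rw [sub_sub_cancel]
          _ ≤ ‖x‖ + ‖x - S x‖ := norm_sub_le _ _
      have hSn : (0:ℝ) ≤ ‖S x‖ := norm_nonneg _
      have hxn : (0:ℝ) ≤ ‖x‖ := norm_nonneg _
      constructor
      · rw [div_mul_eq_mul_div, div_le_iff₀ (by linarith)]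
        nlinarith
      · rw [div_mul_eq_mul_div, le_div_iff₀ (by linarith)]
        nlinarith
end

section
/- Let X be a Banach space, T : X → X a bounded linear operator, and F : X → X a bounded linear operator satisfying ‖F f − f‖ ≤ c ‖F f − T f‖ for all f ∈ X, where c ≥ 0 with c‖T‖ < 1 and c < 1. Then F is a topological automorphism of X, and ‖F⁻¹‖ ≤ (1 + c)/(1 − c‖T‖). -/
set_option maxHeartbeats 1000000 in
theorem fractal_operator_topological_automorphism
    {X : Type*} [NormedAddCommGroup X] [NormedSpace ℝ X] [CompleteSpace X]
    (T F : X →L[ℝ] X) (c : ℝ)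
    (hc0 : 0 ≤ c) (hc1 : c < 1) (hcT : c * ‖T‖ < 1)
    (h : ∀ f : X, ‖F f - f‖ ≤ c * ‖F f - T f‖) :
    ∃ G : X →L[ℝ] X, (∀ x, G (F x) = x) ∧ (∀ x, F (G x) = x) ∧
      ‖G‖ ≤ (1 + c) / (1 - c * ‖T‖) := by
  have hT : (0:ℝ) ≤ ‖T‖ := norm_nonneg _
  set m : ℝ := min (1 - c) (1 - c * ‖T‖) / (1 + c) with hm
  have hm0 : 0 < m := div_pos (lt_min (by linarith) (by linarith)) (by linarith)
  set Fs : ℝ → (X →L[ℝ] X) := fun s => 1 + s • (F - 1) with hFsdef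
  have hFsApp : ∀ s x, Fs s x = x + s • (F x - x) := by
    intro s x
    simp [hFsdef, ContinuousLinearMap.add_apply, ContinuousLinearMap.smul_apply,
      ContinuousLinearMap.sub_apply, ContinuousLinearMap.one_apply]
  -- key convex-combination lower bound
  have key : ∀ s : ℝ, 0 ≤ s → s ≤ 1 → ∀ x : X,
      ((1-s)*(1-c) + s*(1 - c*‖T‖)) * ‖x‖ ≤ (1+c) * ‖Fs s x‖ := by
    intro s hs0 hs1 x
    set a := ‖F x - x‖ with ha
    set K := ‖Fs s x‖ with hK
    set nn := ‖x‖ with hnn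
    set t := ‖T‖ with ht
    have ha0 : 0 ≤ a := norm_nonneg _
    have hK0 : 0 ≤ K := norm_nonneg _
    have hn0 : 0 ≤ nn := norm_nonneg _
    have h1 : nn - s * a ≤ K := by
      have : nn ≤ K + s * a := by
        calc nn = ‖(x + s • (F x - x)) - s • (F x - x)‖ := by rw [add_sub_cancel_right]
        _ ≤ ‖x + s • (F x - x)‖ + ‖s • (F x - x)‖ := norm_sub_le _ _
        _ = K + s * a := by rw [hK, hFsApp, norm_smul, Real.norm_eq_abs, abs_of_nonneg hs0]
      linarith
    have h2 : ‖F x‖ ≤ K + (1-s) * a := by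
      calc ‖F x‖ = ‖(x + s • (F x - x)) + (1-s) • (F x - x)‖ := by
            congr 1; module
      _ ≤ ‖x + s • (F x - x)‖ + ‖(1-s) • (F x - x)‖ := norm_add_le _ _
      _ = K + (1-s) * a := by
            rw [hK, hFsApp, norm_smul, Real.norm_eq_abs, abs_of_nonneg (by linarith)]
    have h3 : a ≤ c * (‖F x‖ + t * nn) := by
      calc a ≤ c * ‖F x - T x‖ := h x
      _ ≤ c * (‖F x‖ + ‖T x‖) := by
            have := norm_sub_le (F x) (T x)
            nlinarith
      _ ≤ c * (‖F x‖ + t * nn) := by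
            have := T.le_opNorm x
            nlinarith
    have h4 : (1 - c + c*s) * a ≤ c*K + c*t*nn := by nlinarith
    have h5 : (nn - K) * (1 - c + c*s) ≤ s * (c*K + c*t*nn) := by
      have hpos : (0:ℝ) ≤ 1 - c + c*s := by nlinarith
      have := mul_le_mul_of_nonneg_right h1 hpos
      nlinarith [mul_le_mul_of_nonneg_left h4 hs0]
    nlinarith [mul_nonneg (mul_nonneg hc0 hs0) hK0, mul_nonneg hc0 hK0]
  have lower : ∀ s : ℝ, 0 ≤ s → s ≤ 1 → ∀ x : X, m * ‖x‖ ≤ ‖Fs s x‖ := by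
    intro s hs0 hs1 x
    have hmin : min (1 - c) (1 - c * ‖T‖) ≤ (1-s)*(1-c) + s*(1 - c*‖T‖) := by
      rcases le_total (1 - c) (1 - c * ‖T‖) with hle | hle
      · rw [min_eq_left hle]; nlinarith
      · rw [min_eq_right hle]; nlinarith
    have := key s hs0 hs1 x
    rw [hm, div_mul_eq_mul_div, div_le_iff₀ (by linarith : (0:ℝ) < 1 + c)]
    nlinarith [norm_nonneg x]
  -- inverse norm bound for units along the path
  have invbound : ∀ s : ℝ, 0 ≤ s → s ≤ 1 → ∀ u : (X →L[ℝ] X)ˣ, (↑u : X →L[ℝ] X) = Fs s →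
      ‖(↑u⁻¹ : X →L[ℝ] X)‖ ≤ 1 / m := by
    intro s hs0 hs1 u hu
    apply ContinuousLinearMap.opNorm_le_bound _ (by positivity)
    intro y
    have h1 : m * ‖(↑u⁻¹ : X →L[ℝ] X) y‖ ≤ ‖Fs s ((↑u⁻¹ : X →L[ℝ] X) y)‖ :=
      lower s hs0 hs1 _
    have h2 : Fs s ((↑u⁻¹ : X →L[ℝ] X) y) = y := by
      rw [← hu]
      have : (↑u : X →L[ℝ] X) ((↑u⁻¹ : X →L[ℝ] X) y) = ((↑u * ↑u⁻¹ : X →L[ℝ] X)) y := rfl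
      rw [this, u.mul_inv]
      rfl
    rw [h2] at h1
    rw [div_mul_eq_mul_div, le_div_iff₀ hm0]
    linarith
  -- step lemma
  have step : ∀ s : ℝ, 0 ≤ s → s ≤ 1 → ∀ t : ℝ, ‖Fs t - Fs s‖ < m →
      IsUnit (Fs s) → IsUnit (Fs t) := by
    intro s hs0 hs1 t hlt hu
    obtain ⟨u, hu⟩ := hu
    have hinv := invbound s hs0 hs1 u hu
    set Δ : X →L[ℝ] X := Fs s - Fs t with hΔ
    have hΔnorm : ‖Δ‖ < m := by rw [hΔ, ← norm_neg]; simpa using hlt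
    have hsmall : ‖(↑u⁻¹ : X →L[ℝ] X) * Δ‖ < 1 := by
      calc ‖(↑u⁻¹ : X →L[ℝ] X) * Δ‖ ≤ ‖(↑u⁻¹ : X →L[ℝ] X)‖ * ‖Δ‖ := norm_mul_le _ _
      _ ≤ (1/m) * ‖Δ‖ := by
            apply mul_le_mul_of_nonneg_right hinv (norm_nonneg _)
      _ < (1/m) * m := by
            apply mul_lt_mul_of_pos_left hΔnorm (by positivity)
      _ = 1 := by field_simp
    set v : (X →L[ℝ] X)ˣ := Units.oneSub _ hsmall with hv
    refine ⟨u * v, ?_⟩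
    have hvval : (↑v : X →L[ℝ] X) = 1 - (↑u⁻¹ : X →L[ℝ] X) * Δ := rfl
    have : (↑(u * v) : X →L[ℝ] X) = ↑u * (1 - (↑u⁻¹ : X →L[ℝ] X) * Δ) := by
      rw [Units.val_mul, hvval]
    rw [this, mul_sub, mul_one, ← mul_assoc, u.mul_inv, one_mul, hu, hΔ]
    abel
  -- induction along the path
  obtain ⟨n, hn⟩ := exists_nat_gt (‖F - (1 : X →L[ℝ] X)‖ / m)
  have hn0 : 0 < (n:ℝ) := lt_of_le_of_lt (div_nonneg (norm_nonneg _) hm0.le) hn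
  have hstepnorm : ∀ k : ℕ, ‖Fs (((k:ℝ)+1)/n) - Fs ((k:ℝ)/n)‖ < m := by
    intro k
    have heq : Fs (((k:ℝ)+1)/n) - Fs ((k:ℝ)/n) = ((1:ℝ)/n) • (F - 1) := by
      rw [hFsdef]; simp only; module
    rw [heq]
    have hle : ‖((1:ℝ)/n) • (F - (1:X →L[ℝ] X))‖ ≤ (1/(n:ℝ)) * ‖F - (1:X →L[ℝ] X)‖ := by
      have := norm_smul_le ((1:ℝ)/n) (F - (1:X →L[ℝ] X))
      rwa [Real.norm_eq_abs, abs_of_nonneg (by positivity)] at this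
    have hlt : (1/(n:ℝ)) * ‖F - (1:X →L[ℝ] X)‖ < m := by
      rw [div_lt_iff₀ hm0] at hn
      rw [one_div, inv_mul_lt_iff₀ hn0]
      nlinarith
    exact lt_of_le_of_lt hle hlt
  have main : ∀ k : ℕ, k ≤ n → IsUnit (Fs ((k:ℝ)/(n:ℝ))) := by
    intro k
    induction k with
    | zero =>
        intro _
        have h0 : Fs (((0:ℕ):ℝ)/(n:ℝ)) = 1 := by
          rw [hFsdef]; simp
        rw [h0]; exact isUnit_one
    | succ k ih =>
        intro hk
        have hk' : k ≤ n := Nat.le_of_succ_le hk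
        have hkn : (k:ℝ)/n ≤ 1 := by
          rw [div_le_one hn0]; exact_mod_cast hk'
        have h0 : (0:ℝ) ≤ (k:ℝ)/n := by positivity
        have := step ((k:ℝ)/n) h0 hkn (((k:ℝ)+1)/n) (hstepnorm k) (ih hk')
        have hcast : ((k+1:ℕ):ℝ)/(n:ℝ) = ((k:ℝ)+1)/n := by push_cast; ring
        rw [hcast]; exact this
  have hF1 : Fs 1 = F := by rw [hFsdef]; simp
  have hFunit : IsUnit F := by
    have := main n le_rfl
    rw [div_self (ne_of_gt hn0), hF1] at this
    exact this
  obtain ⟨u, hu⟩ := hFunit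
  refine ⟨(↑u⁻¹ : X →L[ℝ] X), ?_, ?_, ?_⟩
  · intro x
    have : (↑u⁻¹ : X →L[ℝ] X) (F x) = ((↑u⁻¹ * ↑u : X →L[ℝ] X)) x := by rw [hu]; rfl
    rw [this, u.inv_mul]; rfl
  · intro x
    have : F ((↑u⁻¹ : X →L[ℝ] X) x) = ((↑u * ↑u⁻¹ : X →L[ℝ] X)) x := by rw [hu]; rfl
    rw [this, u.mul_inv]; rfl
  · apply ContinuousLinearMap.opNorm_le_bound _ (div_nonneg (by linarith) (by linarith))
    intro y
    set x := (↑u⁻¹ : X →L[ℝ] X) y with hx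
    have hFx : F x = y := by
      have : F ((↑u⁻¹ : X →L[ℝ] X) y) = ((↑u * ↑u⁻¹ : X →L[ℝ] X)) y := by rw [hu]; rfl
      rw [hx, this, u.mul_inv]; rfl
    have := key 1 zero_le_one le_rfl x
    rw [hF1] at this
    simp only [sub_self, zero_mul, one_mul, zero_add] at this
    rw [hFx] at this
    rw [div_mul_eq_mul_div, le_div_iff₀ (by linarith : (0:ℝ) < 1 - c*‖T‖)]
    nlinarith [norm_nonneg y]
end

section
/- Let V₀ = {p₁, p₂, p₃} be the vertices of an equilateral triangle, V_n the n-th level vertex set of the Sierpiński gasket, and for a function f : V_n → ℝ define the graph energy ℰ_n(f) = (5/3)^n Σ_{x∼_n y} (f(x) − f(y))². Then the sequence (ℰ_n(f))_n obtained by restricting a fixed function f on V_* = ⋃ V_m is non-decreasing in n: ℰ_{n−1}(f|_{V_{n−1}}) ≤ ℰ_n(f|_{V_n}) for all n ≥ 1. -/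
/-- The contraction maps of the Sierpiński gasket IFS. -/
noncomputable def gasketMap (p : Fin 3 → EuclideanSpace ℝ (Fin 2)) (i : Fin 3)
    (x : EuclideanSpace ℝ (Fin 2)) : EuclideanSpace ℝ (Fin 2) :=
  (1/2 : ℝ) • (x + p i)

/-- The composition `L_{w₁} ∘ L_{w₂} ∘ ⋯ ∘ L_{wₙ}` associated with a word `w`. -/
noncomputable def gasketWordMap (p : Fin 3 → EuclideanSpace ℝ (Fin 2)) {n : ℕ}
    (w : Fin n → Fin 3) : EuclideanSpace ℝ (Fin 2) → EuclideanSpace ℝ (Fin 2) :=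
  (List.ofFn w).foldr (fun i g => gasketMap p i ∘ g) id

/-- The level-`n` graph energy `ℰ_n(f) = (5/3)^n ∑_{x ∼ₙ y} (f x - f y)²`, where
`x ∼ₙ y` iff `x = L_w(pᵢ)`, `y = L_w(p_j)` for some word `w` of length `n`
(each edge is counted with the same multiplicity at every level). -/
noncomputable def graphEnergy (p : Fin 3 → EuclideanSpace ℝ (Fin 2))
    (f : EuclideanSpace ℝ (Fin 2) → ℝ) (n : ℕ) : ℝ :=
  (5/3 : ℝ)^n * ∑ w : Fin n → Fin 3, ∑ i : Fin 3, ∑ j : Fin 3,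
    (f (gasketWordMap p w (p i)) - f (gasketWordMap p w (p j)))^2

lemma foldr_comp (p : Fin 3 → EuclideanSpace ℝ (Fin 2)) (l : List (Fin 3))
    (b : EuclideanSpace ℝ (Fin 2) → EuclideanSpace ℝ (Fin 2)) :
    l.foldr (fun i g => gasketMap p i ∘ g) b
      = (l.foldr (fun i g => gasketMap p i ∘ g) id) ∘ b := by
  induction l with
  | nil => rfl
  | cons a l ih => simp [List.foldr_cons, ih]; rfl

lemma gasketWordMap_snoc (p : Fin 3 → EuclideanSpace ℝ (Fin 2)) {n : ℕ}
    (w : Fin n → Fin 3) (k : Fin 3) :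
    gasketWordMap p (Fin.snoc w k) = gasketWordMap p w ∘ gasketMap p k := by
  unfold gasketWordMap
  rw [List.ofFn_succ']
  simp only [Fin.snoc_castSucc, Fin.snoc_last]
  rw [List.concat_eq_append, List.foldr_append, foldr_comp]
  rfl

lemma cell_ineq (a b c u v w : ℝ) :
    ((a-b)^2+(b-a)^2)+((a-c)^2+(c-a)^2)+((b-c)^2+(c-b)^2) ≤ (5/3) *
    ( (((a-u)^2+(u-a)^2)+((a-v)^2+(v-a)^2)+((u-v)^2+(v-u)^2))
    + (((b-u)^2+(u-b)^2)+((b-w)^2+(w-b)^2)+((u-w)^2+(w-u)^2))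
    + (((c-v)^2+(v-c)^2)+((c-w)^2+(w-c)^2)+((v-w)^2+(w-v)^2)) ) := by
  nlinarith [sq_nonneg (5*u - 2*a - 2*b - c), sq_nonneg (5*v - 2*a - 2*c - b),
    sq_nonneg (5*w - a - 2*b - 2*c), sq_nonneg (5*u - 5*v - b + c),
    sq_nonneg (5*u - 5*w - a + c), sq_nonneg (5*v - 5*w - a + b)]

theorem graphEnergy_monotone
    (p : Fin 3 → EuclideanSpace ℝ (Fin 2))
    (hne : p 0 ≠ p 1)
    (heq1 : dist (p 0) (p 1) = dist (p 1) (p 2))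
    (heq2 : dist (p 1) (p 2) = dist (p 0) (p 2))
    (f : EuclideanSpace ℝ (Fin 2) → ℝ) :
    ∀ n : ℕ, 1 ≤ n → graphEnergy p f (n - 1) ≤ graphEnergy p f n := by
  rintro n hn
  obtain ⟨m, rfl⟩ : ∃ m, n = m + 1 := ⟨n - 1, (Nat.succ_pred_eq_of_pos hn).symm⟩
  simp only [Nat.add_sub_cancel, graphEnergy]
  rw [← (Fin.snocEquiv (fun _ : Fin (m+1) => Fin 3)).sum_comp
    (fun w : Fin (m+1) → Fin 3 => ∑ i : Fin 3, ∑ j : Fin 3,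
      (f (gasketWordMap p w (p i)) - f (gasketWordMap p w (p j)))^2), Fintype.sum_prod_type]
  rw [pow_succ, mul_assoc]
  rw [show (∑ x : Fin 3, ∑ y : Fin m → Fin 3, ∑ i : Fin 3, ∑ j : Fin 3,
      (f (gasketWordMap p ((Fin.snocEquiv fun _ => Fin 3) (x, y)) (p i))
        - f (gasketWordMap p ((Fin.snocEquiv fun _ => Fin 3) (x, y)) (p j)))^2)
      = ∑ y : Fin m → Fin 3, ∑ x : Fin 3, ∑ i : Fin 3, ∑ j : Fin 3,
      (f (gasketWordMap p ((Fin.snocEquiv fun _ => Fin 3) (x, y)) (p i))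
        - f (gasketWordMap p ((Fin.snocEquiv fun _ => Fin 3) (x, y)) (p j)))^2
    from Finset.sum_comm]
  refine mul_le_mul_of_nonneg_left ?_ (by positivity : (0:ℝ) ≤ (5/3:ℝ)^m)
  rw [Finset.mul_sum]
  refine Finset.sum_le_sum fun w' _ => ?_
  have hE : ∀ (x : Fin 3) (y : Fin m → Fin 3),
      ((Fin.snocEquiv fun _ => Fin 3) (x, y) : Fin (m+1) → Fin 3) = Fin.snoc y x :=
    fun _ _ => rfl
  simp only [hE, gasketWordMap_snoc, Function.comp_apply]
  have hkk : ∀ k : Fin 3, gasketMap p k (p k) = p k := by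
    intro k; unfold gasketMap; module
  have h10 : gasketMap p 1 (p 0) = gasketMap p 0 (p 1) := by
    unfold gasketMap; rw [add_comm]
  have h20 : gasketMap p 2 (p 0) = gasketMap p 0 (p 2) := by
    unfold gasketMap; rw [add_comm]
  have h21 : gasketMap p 2 (p 1) = gasketMap p 1 (p 2) := by
    unfold gasketMap; rw [add_comm]
  simp only [Fin.sum_univ_three, hkk, h10, h20, h21]
  have := cell_ineq (f (gasketWordMap p w' (p 0))) (f (gasketWordMap p w' (p 1)))
    (f (gasketWordMap p w' (p 2))) (f (gasketWordMap p w' (gasketMap p 0 (p 1))))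
    (f (gasketWordMap p w' (gasketMap p 0 (p 2)))) (f (gasketWordMap p w' (gasketMap p 1 (p 2))))
  nlinarith [this]
end
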